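/- Let u ⊆ w be simplices of a simplicial complex 𝒞 on which a group Γ₀ acts, with stabilizers K_u ≥ K_w acting by isometries on a tree T, and for each simplex x let T_x be the minimal K_x-invariant subtree if K_x has no global fixed point, and the maximal fixed subtree otherwise. Assume that whenever K_x has a global fixed point its maximal fixed subtree is a single vertex or a single edge, and is the full fixed set of some element of K_x. Then T_u ∩ T_w ≠ ∅. -/

import Mathlib

open Pointwise

def IsSubtree {V : Type*} (T : SimpleGraph V) (S : Set V) : Prop :=
  S.Nonempty ∧ ∀ ⦃u v : V⦄, u ∈ S → v ∈ S →
    ∀ (p : T.Walk u v), p.IsPath → ∀ w ∈ p.support, w ∈ S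

/-- The subtree associated to a subgroup `K` acting on a tree: the maximal fixed
subtree (the fixed point set) if `K` has a global fixed point, and the minimal
`K`-invariant subtree otherwise. -/
def IsAssocSubtree {V Γ : Type*} [Group Γ] [MulAction Γ V]
    (T : SimpleGraph V) (K : Subgroup Γ) (S : Set V) : Prop :=
  ({v : V | ∀ γ ∈ K, γ • v = v}.Nonempty → S = {v : V | ∀ γ ∈ K, γ • v = v}) ∧
  (¬ {v : V | ∀ γ ∈ K, γ • v = v}.Nonempty →
    IsSubtree T S ∧ (∀ γ ∈ K, (γ • ·) '' S = S) ∧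
    ∀ S' : Set V, IsSubtree T S' → (∀ γ ∈ K, (γ • ·) '' S' = S') → S ⊆ S')


namespace Stmt17Aux

open SimpleGraph

variable {V : Type*} {T : SimpleGraph V}

/-- In a tree, every path realizes the distance. -/
lemma path_length_eq_dist (hT : T.IsTree) {x y : V} (P : T.Walk x y) (hP : P.IsPath) :
    P.length = T.dist x y := by
  obtain ⟨Q, hQ, hlen⟩ := hT.isConnected.exists_path_of_dist x y
  rw [(hT.existsUnique_path x y).unique hP hQ, hlen]

/-- In a tree, adjacent vertices have different distances to a basepoint. -/
lemma adj_dist_ne (hT : T.IsTree) {p x y : V} (h : T.Adj x y) :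
    T.dist p x ≠ T.dist p y := by
  classical
  intro heq
  obtain ⟨P, hP, hlen⟩ := hT.isConnected.exists_path_of_dist p y
  by_cases hx : x ∈ P.support
  · have h1 : (P.takeUntil x hx).length = T.dist p x :=
      path_length_eq_dist hT _ (hP.takeUntil hx)
    have h2 : (P.dropUntil x hx).length = T.dist x y :=
      path_length_eq_dist hT _ (hP.dropUntil hx)
    have h3 : (P.takeUntil x hx).length + (P.dropUntil x hx).length = P.length := by
      rw [← Walk.length_append, P.take_spec hx]
    have h4 : T.dist x y = 1 := dist_eq_one_iff_adj.mpr h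
    omega
  · have hpath : (P.concat h.symm).IsPath := by
      rw [← Walk.isPath_reverse_iff, Walk.reverse_concat, Walk.cons_isPath_iff]
      refine ⟨hP.reverse, ?_⟩
      rwa [Walk.support_reverse, List.mem_reverse]
    have := path_length_eq_dist hT _ hpath
    rw [Walk.length_concat, hlen] at this
    omega

/-- In a tree there is no vertex with two distinct neighbors that are both strictly
closer to a basepoint. -/
lemma no_two_down (hT : T.IsTree) {p m a b : V} (h1 : T.Adj m a) (h2 : T.Adj m b)
    (hab : a ≠ b) (ha : T.dist p a < T.dist p m) (hb : T.dist p b < T.dist p m) :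
    False := by
  classical
  have key : ∀ c : V, T.Adj m c → T.dist p c < T.dist p m →
      ∃ (P : T.Walk p m), P.IsPath ∧ P.reverse.getVert 1 = c := by
    intro c hc hclt
    obtain ⟨P, hP, hlen⟩ := hT.isConnected.exists_path_of_dist p c
    have hm : m ∉ P.support := by
      intro hm
      have := Walk.length_takeUntil_le P hm
      have := path_length_eq_dist hT _ (hP.takeUntil hm)
      omega
    have hpath : (P.concat hc.symm).IsPath := by
      rw [← Walk.isPath_reverse_iff, Walk.reverse_concat, Walk.cons_isPath_iff]
      refine ⟨hP.reverse, ?_⟩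
      rwa [Walk.support_reverse, List.mem_reverse]
    refine ⟨P.concat hc.symm, hpath, ?_⟩
    rw [Walk.reverse_concat]
    exact (Walk.getVert_cons_succ (n := 0) _ _).trans (Walk.getVert_zero _)
  obtain ⟨Pa, hPa, hga⟩ := key a h1 ha
  obtain ⟨Pb, hPb, hgb⟩ := key b h2 hb
  have : Pa = Pb := (hT.existsUnique_path p m).unique hPa hPb
  rw [this, hgb] at hga
  exact hab hga.symm

/-- Going away from the basepoint along a path in a tree, the distance keeps
increasing. -/
lemma dist_up (hT : T.IsTree) (p : V) :
    ∀ {a b : V} (W : T.Walk a b), W.IsPath → ∀ c, T.Adj c a → c ∉ W.support →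
      T.dist p c < T.dist p a → T.dist p b = T.dist p a + W.length := by
  intro a b W
  induction W with
  | nil => simp
  | @cons a a₁ b h W' ih =>
    intro hW c hca hc hclt
    have ha₁mem : a₁ ∈ (Walk.cons h W').support := by
      simp [Walk.support_cons]
    have hca₁ : c ≠ a₁ := fun hh => hc (hh ▸ ha₁mem)
    have hne : T.dist p a ≠ T.dist p a₁ := adj_dist_ne hT h
    have hle : T.dist p a₁ ≤ T.dist p a + 1 := by
      have := hT.isConnected.dist_triangle (u := p) (v := a) (w := a₁)
      rwa [dist_eq_one_iff_adj.mpr h] at this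
    have hnotlt : ¬ T.dist p a₁ < T.dist p a :=
      fun hh => no_two_down hT hca.symm h hca₁ hclt hh
    have heq : T.dist p a₁ = T.dist p a + 1 := by omega
    rw [Walk.cons_isPath_iff] at hW
    have := ih hW.1 a h hW.2 (by omega)
    rw [this, heq, Walk.length_cons]
    omega

/-- An elliptic automorphism of a tree preserving a convex subtree fixes
a point of that subtree. -/
lemma elliptic_fix {Γ : Type*} [Group Γ] [MulAction Γ V]
    (hT : T.IsTree) (hact : ∀ (γ : Γ) (u v : V), T.Adj u v → T.Adj (γ • u) (γ • v))
    (S : Set V) (hS : IsSubtree T S) (γ : Γ) (hinv : (γ • ·) '' S = S)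
    (p : V) (hp : γ • p = p) : ∃ q ∈ S, γ • q = q := by
  classical
  -- the action is by isometries
  have hdist_le : ∀ (δ : Γ) (x y : V), T.dist (δ • x) (δ • y) ≤ T.dist x y := by
    intro δ x y
    obtain ⟨W, hW⟩ := hT.isConnected.exists_walk_length_eq_dist x y
    have := SimpleGraph.dist_le
      (W.map ⟨(δ • ·), fun hxy => hact δ _ _ hxy⟩)
    rwa [Walk.length_map, hW] at this
  have hdist : ∀ x y : V, T.dist (γ • x) (γ • y) = T.dist x y := by
    intro x y
    refine le_antisymm (hdist_le γ x y) ?_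
    have := hdist_le γ⁻¹ (γ • x) (γ • y)
    simpa using this
  have hmem : ∀ x ∈ S, γ • x ∈ S := by
    intro x hx
    rw [← hinv]
    exact ⟨x, hx, rfl⟩
  -- nearest point in S to p
  set M : Set ℕ := {n | ∃ t ∈ S, T.dist p t = n} with hM
  have hMne : M.Nonempty := ⟨_, hS.1.choose, hS.1.choose_spec, rfl⟩
  obtain ⟨q, hq, hqd⟩ := Nat.sInf_mem hMne
  have hmin : ∀ t ∈ S, sInf M ≤ T.dist p t := fun t ht => Nat.sInf_le ⟨t, ht, rfl⟩
  -- uniqueness of the nearest point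
  have huniq : ∀ q' ∈ S, T.dist p q' = sInf M → q' = q := by
    intro q' hq' hq'd
    by_contra hne
    obtain ⟨Q, hQ, _⟩ := hT.isConnected.exists_path_of_dist q q'
    have hsupp : ∀ x ∈ Q.support, x ∈ S := hS.2 hq hq' Q hQ
    cases Q with
    | nil => exact hne rfl
    | @cons _ a₁ _ h Q' =>
      have ha₁S : a₁ ∈ S := hsupp a₁ (by simp [Walk.support_cons, Q'.start_mem_support])
      have ha₁ge : sInf M ≤ T.dist p a₁ := hmin a₁ ha₁S
      have hane : T.dist p q ≠ T.dist p a₁ := adj_dist_ne hT h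
      have hle : T.dist p a₁ ≤ T.dist p q + 1 := by
        have := hT.isConnected.dist_triangle (u := p) (v := q) (w := a₁)
        rwa [dist_eq_one_iff_adj.mpr h] at this
      have ha₁ : T.dist p a₁ = sInf M + 1 := by omega
      rw [Walk.cons_isPath_iff] at hQ
      have := dist_up hT p Q' hQ.1 q h hQ.2 (by omega)
      omega
  refine ⟨q, hq, huniq (γ • q) (hmem q hq) ?_⟩
  rw [← hdist p q, hp] at hqd
  exact hqd

end Stmt17Aux

/-- Let `u ⊆ w` be simplices of a simplicial complex with a `Γ`-action,
with (setwise) stabilizers `K_w ≤ K_u` acting by automorphisms on a tree `T`, and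
let `T_u, T_w` be the associated subtrees (minimal invariant subtree when there is no
global fixed point, maximal fixed subtree otherwise).  Assume that whenever one of
`K_u, K_w` has a global fixed point, its maximal fixed subtree is a single vertex or
a single edge and is the full fixed point set of some element of the group.  Then
`T_u ∩ T_w ≠ ∅`. -/
theorem stmt17 {X Γ V : Type*} [Group Γ] [DecidableEq X] [MulAction Γ X]
    [MulAction Γ V]
    (T : SimpleGraph V) (hT : T.IsTree)
    (hact : ∀ (γ : Γ) (u v : V), T.Adj u v → T.Adj (γ • u) (γ • v))
    (u w : Finset X) (huw : u ⊆ w)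
    (Ku Kw : Subgroup Γ)
    (hKu : Ku = MulAction.stabilizer Γ u) (hKw : Kw = MulAction.stabilizer Γ w)
    (hle : Kw ≤ Ku)
    (Tu Tw : Set V)
    (hTu : IsAssocSubtree T Ku Tu) (hTw : IsAssocSubtree T Kw Tw)
    (hTune : Tu.Nonempty) (hTwne : Tw.Nonempty)
    (hfixKu : {v : V | ∀ γ ∈ Ku, γ • v = v}.Nonempty →
      ((∃ a, {v : V | ∀ γ ∈ Ku, γ • v = v} = {a}) ∨
        (∃ a b, T.Adj a b ∧ {v : V | ∀ γ ∈ Ku, γ • v = v} = {a, b})) ∧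
      ∃ γ ∈ Ku, {v : V | γ • v = v} = {v : V | ∀ γ' ∈ Ku, γ' • v = v})
    (hfixKw : {v : V | ∀ γ ∈ Kw, γ • v = v}.Nonempty →
      ((∃ a, {v : V | ∀ γ ∈ Kw, γ • v = v} = {a}) ∨
        (∃ a b, T.Adj a b ∧ {v : V | ∀ γ ∈ Kw, γ • v = v} = {a, b})) ∧
      ∃ γ ∈ Kw, {v : V | γ • v = v} = {v : V | ∀ γ' ∈ Kw, γ' • v = v}) :
    (Tu ∩ Tw).Nonempty := by
  classical
  have hsub : {v : V | ∀ γ ∈ Ku, γ • v = v} ⊆ {v : V | ∀ γ ∈ Kw, γ • v = v} :=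
    fun v hv γ hγ => hv γ (hle hγ)
  by_cases hW : {v : V | ∀ γ ∈ Kw, γ • v = v}.Nonempty
  · by_cases hU : {v : V | ∀ γ ∈ Ku, γ • v = v}.Nonempty
    · -- both fix sets nonempty: Tu = Fix(Ku) ⊆ Fix(Kw) = Tw
      obtain ⟨x, hx⟩ := hTune
      refine ⟨x, hx, ?_⟩
      rw [hTw.1 hW]
      exact hsub ((hTu.1 hU) ▸ hx)
    · -- Fix(Ku) empty, Fix(Kw) nonempty: projection argument
      obtain ⟨-, γ, hγKw, hγfix⟩ := hfixKw hW
      obtain ⟨p, hp⟩ := Set.Nonempty.mono (Set.Subset.refl _) hW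
      have hpγ : γ • p = p := by rw [← hγfix] at hp; exact hp
      obtain ⟨hSTu, hInv, -⟩ := hTu.2 hU
      obtain ⟨q, hqS, hqfix⟩ := Stmt17Aux.elliptic_fix hT hact Tu hSTu γ
        (hInv γ (hle hγKw)) p hpγ
      refine ⟨q, hqS, ?_⟩
      rw [hTw.1 hW, ← hγfix]
      exact hqfix
  · -- Fix(Kw) empty (hence Fix(Ku) empty): minimality of Tw
    have hU : ¬ {v : V | ∀ γ ∈ Ku, γ • v = v}.Nonempty :=
      fun ⟨x, hx⟩ => hW ⟨x, hsub hx⟩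
    obtain ⟨hSTu, hInvU, -⟩ := hTu.2 hU
    obtain ⟨-, -, hmin⟩ := hTw.2 hW
    have hTwTu : Tw ⊆ Tu := hmin Tu hSTu (fun γ hγ => hInvU γ (hle hγ))
    obtain ⟨x, hx⟩ := hTwne
    exact ⟨x, hTwTu hx, hx⟩
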